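/- In the Drinfeld–Kohno Lie algebra 𝔤_n, the Lie subalgebra 𝔦_n generated by the elements t_{n1}, t_{n2}, ..., t_{n,n-1} is an ideal of 𝔤_n. -/

import Mathlib

noncomputable section
open FreeLieAlgebra

def DKrels (n : ℕ) : Set (FreeLieAlgebra ℚ (Fin n × Fin n)) :=
  {x | (∃ i, x = of ℚ (i, i)) ∨
       (∃ i j, x = of ℚ (i, j) - of ℚ (j, i)) ∨
       (∃ i j k, i ≠ j ∧ i ≠ k ∧ j ≠ k ∧
          x = ⁅of ℚ (i, j) + of ℚ (i, k), of ℚ (j, k)⁆) ∨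
       (∃ i j k l, ({i, j} ∩ {k, l} : Set (Fin n)) = ∅ ∧ i ≠ j ∧ k ≠ l ∧
          x = ⁅of ℚ (i, j), of ℚ (k, l)⁆)}

def DKideal (n : ℕ) : LieIdeal ℚ (FreeLieAlgebra ℚ (Fin n × Fin n)) :=
  LieSubmodule.lieSpan ℚ _ (DKrels n)

/-- The Drinfeld–Kohno Lie algebra on `n` strands over `ℚ`. -/
def DK (n : ℕ) : Type := FreeLieAlgebra ℚ (Fin n × Fin n) ⧸ DKideal n

instance (n : ℕ) : LieRing (DK n) := by unfold DK; infer_instance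
instance (n : ℕ) : LieAlgebra ℚ (DK n) := by unfold DK; infer_instance

/-- The generator `t_{ij}` of the Drinfeld–Kohno Lie algebra. -/
def tDK {n : ℕ} (i j : Fin n) : DK n :=
  LieSubmodule.Quotient.mk' (DKideal n) (of ℚ (i, j))

namespace DKaux

/-- The quotient map onto the Drinfeld–Kohno Lie algebra. -/
def mkDK {n : ℕ} (x : FreeLieAlgebra ℚ (Fin n × Fin n)) : DK n :=
  LieSubmodule.Quotient.mk' (DKideal n) x

lemma mkDK_surjective {n : ℕ} : Function.Surjective (mkDK (n := n)) :=
  LieSubmodule.Quotient.surjective_mk' (DKideal n)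

lemma tDK_eq {n : ℕ} (i j : Fin n) : tDK i j = mkDK (of ℚ (i, j)) := rfl

lemma mkDK_lie {n : ℕ} (a b : FreeLieAlgebra ℚ (Fin n × Fin n)) :
    mkDK ⁅a, b⁆ = ⁅mkDK a, mkDK b⁆ := rfl

lemma mkDK_sub {n : ℕ} (a b : FreeLieAlgebra ℚ (Fin n × Fin n)) :
    mkDK (a - b) = mkDK a - mkDK b := by
  show LieSubmodule.Quotient.mk' (DKideal n) (a - b) =
    LieSubmodule.Quotient.mk' (DKideal n) a - LieSubmodule.Quotient.mk' (DKideal n) b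
  exact map_sub _ a b

lemma mkDK_add {n : ℕ} (a b : FreeLieAlgebra ℚ (Fin n × Fin n)) :
    mkDK (a + b) = mkDK a + mkDK b := by
  show LieSubmodule.Quotient.mk' (DKideal n) (a + b) =
    LieSubmodule.Quotient.mk' (DKideal n) a + LieSubmodule.Quotient.mk' (DKideal n) b
  exact map_add _ a b

lemma mkDK_smul {n : ℕ} (r : ℚ) (a : FreeLieAlgebra ℚ (Fin n × Fin n)) :
    mkDK (r • a) = r • mkDK a := by
  show LieSubmodule.Quotient.mk' (DKideal n) (r • a) =
    r • LieSubmodule.Quotient.mk' (DKideal n) a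
  exact map_smul _ r a

lemma mkDK_zero {n : ℕ} : mkDK (0 : FreeLieAlgebra ℚ (Fin n × Fin n)) = 0 := by
  show LieSubmodule.Quotient.mk' (DKideal n) 0 =
    (0 : FreeLieAlgebra ℚ (Fin n × Fin n) ⧸ DKideal n)
  exact map_zero _

lemma mk_rel {n : ℕ} {x : FreeLieAlgebra ℚ (Fin n × Fin n)} (hx : x ∈ DKrels n) :
    mkDK x = 0 := by
  show LieSubmodule.Quotient.mk' (DKideal n) x = 0
  rw [LieSubmodule.Quotient.mk_eq_zero]
  exact LieSubmodule.subset_lieSpan hx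

lemma tDK_self {n : ℕ} (i : Fin n) : tDK i i = 0 :=
  mk_rel (Or.inl ⟨i, rfl⟩)

lemma tDK_symm {n : ℕ} (i j : Fin n) : tDK i j = tDK j i := by
  have h := mk_rel (n := n) (Or.inr (Or.inl ⟨i, j, rfl⟩))
  rw [mkDK_sub] at h
  exact sub_eq_zero.mp h

lemma rel3 {n : ℕ} {i j k : Fin n} (hij : i ≠ j) (hik : i ≠ k) (hjk : j ≠ k) :
    ⁅tDK i j + tDK i k, tDK j k⁆ = 0 := by
  have h := mk_rel (n := n) (Or.inr (Or.inr (Or.inl ⟨i, j, k, hij, hik, hjk, rfl⟩)))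
  rw [mkDK_lie, mkDK_add] at h
  exact h

lemma rel4 {n : ℕ} {i j k l : Fin n} (h : ({i, j} ∩ {k, l} : Set (Fin n)) = ∅)
    (hij : i ≠ j) (hkl : k ≠ l) : ⁅tDK i j, tDK k l⁆ = 0 := by
  have h' := mk_rel (n := n) (Or.inr (Or.inr (Or.inr ⟨i, j, k, l, h, hij, hkl, rfl⟩)))
  rw [mkDK_lie] at h'
  exact h'

lemma key {n : ℕ} {a k j : Fin n} (hak : a ≠ k) (haj : a ≠ j) (hkj : k ≠ j) :
    ⁅tDK k j, tDK a k⁆ = ⁅tDK a k, tDK a j⁆ := by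
  have h1 := rel3 hak haj hkj
  have h2 := rel3 hkj hak.symm haj.symm
  rw [tDK_symm k a, tDK_symm j a] at h2
  rw [add_lie] at h1 h2
  have e1 : ⁅tDK a k, tDK k j⁆ = -⁅tDK a j, tDK k j⁆ := eq_neg_of_add_eq_zero_left h1
  have e2 : ⁅tDK k j, tDK a j⁆ = -⁅tDK a k, tDK a j⁆ := eq_neg_of_add_eq_zero_left h2
  calc ⁅tDK k j, tDK a k⁆ = -⁅tDK a k, tDK k j⁆ := (lie_skew _ _).symm
    _ = -(-⁅tDK a j, tDK k j⁆) := by rw [e1]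
    _ = ⁅tDK a j, tDK k j⁆ := neg_neg _
    _ = -⁅tDK k j, tDK a j⁆ := (lie_skew _ _).symm
    _ = ⁅tDK a k, tDK a j⁆ := by rw [e2, neg_neg]

/-- The generating set of the last-strand subalgebra. -/
def genSet (n : ℕ) : Set (DK (n + 1)) :=
  {z | ∃ k : Fin (n + 1), k ≠ Fin.last n ∧ z = tDK (Fin.last n) k}

/-- The last-strand subalgebra. -/
def Ispan (n : ℕ) : LieSubalgebra ℚ (DK (n + 1)) :=
  LieSubalgebra.lieSpan ℚ (DK (n + 1)) (genSet n)

lemma gen_in_Ispan {n : ℕ} {k : Fin (n + 1)} (hk : k ≠ Fin.last n) :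
    tDK (Fin.last n) k ∈ Ispan n :=
  LieSubalgebra.subset_lieSpan ⟨k, hk, rfl⟩

lemma tDK_last_mem {n : ℕ} (k : Fin (n + 1)) : tDK (Fin.last n) k ∈ Ispan n := by
  by_cases hk : k = Fin.last n
  · subst hk; rw [tDK_self]; exact (Ispan n).zero_mem
  · exact gen_in_Ispan hk

lemma gen_mem {n : ℕ} (i j : Fin (n + 1)) {k : Fin (n + 1)} (hk : k ≠ Fin.last n) :
    ⁅tDK i j, tDK (Fin.last n) k⁆ ∈ Ispan n := by
  set a := Fin.last n with ha
  by_cases hi : i = a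
  · subst hi
    exact (Ispan n).lie_mem (tDK_last_mem j) (gen_in_Ispan hk)
  by_cases hj : j = a
  · subst hj
    rw [tDK_symm i]
    exact (Ispan n).lie_mem (tDK_last_mem i) (gen_in_Ispan hk)
  by_cases hij : i = j
  · subst hij; rw [tDK_self, zero_lie]; exact (Ispan n).zero_mem
  by_cases hik : i = k
  · subst hik
    rw [key (Ne.symm hk) (Ne.symm hj) (fun h => hij h)]
    exact (Ispan n).lie_mem (gen_in_Ispan hk) (gen_in_Ispan hj)
  by_cases hjk : j = k
  · subst hjk
    rw [tDK_symm i j, key (Ne.symm hk) (Ne.symm hi) (Ne.symm hij)]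
    exact (Ispan n).lie_mem (gen_in_Ispan hk) (gen_in_Ispan hi)
  · rw [rel4 ?_ hij (Ne.symm hk)]
    · exact (Ispan n).zero_mem
    · apply Set.eq_empty_iff_forall_notMem.mpr
      rintro x ⟨hx1, hx2⟩
      rcases hx1 with rfl | rfl <;> rcases hx2 with rfl | rfl
      · exact hi rfl
      · exact hik rfl
      · exact hj rfl
      · exact hjk rfl

lemma gen_bracket {n : ℕ} (i j : Fin (n + 1)) :
    ∀ y ∈ Ispan n, ⁅tDK i j, y⁆ ∈ Ispan n := by
  intro y hy
  have H : y ∈ Ispan n ∧ ⁅tDK i j, y⁆ ∈ Ispan n := by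
    refine LieSubalgebra.lieSpan_induction ℚ
      (p := fun y _ => y ∈ Ispan n ∧ ⁅tDK i j, y⁆ ∈ Ispan n) ?_ ?_ ?_ ?_ ?_ hy
    · rintro z ⟨k, hk, rfl⟩
      exact ⟨gen_in_Ispan hk, gen_mem i j hk⟩
    · simp only [lie_zero]
      exact ⟨(Ispan n).zero_mem, (Ispan n).zero_mem⟩
    · rintro x y _ _ ⟨h1, h2⟩ ⟨h3, h4⟩
      rw [lie_add]
      exact ⟨(Ispan n).add_mem h1 h3, (Ispan n).add_mem h2 h4⟩
    · rintro r x _ ⟨h1, h2⟩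
      rw [lie_smul]
      exact ⟨(Ispan n).smul_mem r h1, (Ispan n).smul_mem r h2⟩
    · rintro x y _ _ ⟨h1, h2⟩ ⟨h3, h4⟩
      rw [leibniz_lie]
      exact ⟨(Ispan n).lie_mem h1 h3,
        (Ispan n).add_mem ((Ispan n).lie_mem h2 h3) ((Ispan n).lie_mem h1 h4)⟩
  exact H.2

lemma free_span {X : Type} (q : FreeLieAlgebra ℚ X) :
    q ∈ LieSubalgebra.lieSpan ℚ (FreeLieAlgebra ℚ X) (Set.range (of ℚ)) := by
  set S := LieSubalgebra.lieSpan ℚ (FreeLieAlgebra ℚ X) (Set.range (of ℚ)) with hS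
  let F : FreeLieAlgebra ℚ X →ₗ⁅ℚ⁆ S :=
    lift ℚ (fun x => ⟨of ℚ x, LieSubalgebra.subset_lieSpan ⟨x, rfl⟩⟩)
  have h : S.incl.comp F = LieHom.id := by
    apply hom_ext
    intro x
    simp [F, lift_of_apply]
  have h2 : S.incl (F q) = q := LieHom.congr_fun h q
  exact h2 ▸ (F q).2

end DKaux

open DKaux in
/-- in the Drinfeld–Kohno Lie algebra `𝔤_{n+1}`, the Lie
subalgebra `𝔦` generated by the elements `t_{nk}` (bracket of the last strand
with the others) is an ideal: `⁅x, y⁆ ∈ 𝔦` whenever `y ∈ 𝔦`. -/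
theorem dk_last_strand_subalgebra_is_ideal (n : ℕ) :
    ∀ x y : DK (n + 1),
      y ∈ LieSubalgebra.lieSpan ℚ (DK (n + 1))
            {z | ∃ k : Fin (n + 1), k ≠ Fin.last n ∧ z = tDK (Fin.last n) k} →
      ⁅x, y⁆ ∈ LieSubalgebra.lieSpan ℚ (DK (n + 1))
            {z | ∃ k : Fin (n + 1), k ≠ Fin.last n ∧ z = tDK (Fin.last n) k} := by
  intro x
  show ∀ y ∈ Ispan n, ⁅x, y⁆ ∈ Ispan n
  obtain ⟨q, rfl⟩ := mkDK_surjective x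
  refine LieSubalgebra.lieSpan_induction ℚ
    (p := fun q _ => ∀ y ∈ Ispan n, ⁅mkDK q, y⁆ ∈ Ispan n)
    ?_ ?_ ?_ ?_ ?_ (free_span q)
  · rintro z ⟨⟨i, j⟩, rfl⟩
    exact gen_bracket i j
  · intro y hy
    rw [mkDK_zero, zero_lie]
    exact (Ispan n).zero_mem
  · rintro a b _ _ ha hb y hy
    rw [mkDK_add, add_lie]
    exact (Ispan n).add_mem (ha y hy) (hb y hy)
  · rintro r x _ hx y hy
    rw [mkDK_smul, smul_lie]
    exact (Ispan n).smul_mem r (hx y hy)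
  · rintro a b _ _ ha hb y hy
    rw [mkDK_lie, lie_lie]
    exact (Ispan n).sub_mem ((ha _ (hb y hy))) ((hb _ (ha y hy)))
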